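/- Let $t_0 \in \mathbb{R}$, $\theta \ge 0$, $\mu_1, \mu_2 > 0$, let $\Upsilon : \mathbb{R} \to \mathbb{R}$ be continuously differentiable with $\Upsilon(t) > 0$ for all $t \ge t_0$, and let $\varrho_1 \ge 0$, $\varrho_2 > 0$. Let $x_1, x_2, u, d_1, d_2 : \mathbb{R} \to \mathbb{R}$ with $x_1, x_2$ differentiable, $u, d_1, d_2$ continuous, $x_1'(t) = x_2(t) + d_1(t)$, $x_2'(t) = u(t) + d_2(t)$, and $\sqrt{d_1(t)^2 + d_2(t)^2} \le \theta$ for all $t \ge t_0$. Let $h_1 : \mathbb{R}^2 \to \mathbb{R}$ be twice continuously differentiable with $\partial h_1/\partial p_2 \equiv 0$, set $L_f h_1(p) = \frac{\partial h_1}{\partial p_1}(p)\,p_2$, $\Lambda_1(p) = \frac{1}{4\mu_1}\|\nabla h_1(p)\|^2 + \mu_1\theta^2$, $h_2(t,p) = \varrho_1\,\Upsilon(t)\,h_1(p) + L_f h_1(p) - \Lambda_1(p)$, and $\Lambda_2(t,p) = \frac{1}{4\mu_2}\|\nabla_p h_2(t,p)\|^2 + \mu_2\theta^2$. Assume $h_2(t_0,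 x(t_0)) > 0$ and that for all $t \ge t_0$ the control satisfies $\partial_t h_2(t, x(t)) + \nabla_p h_2(t, x(t)) \cdot (x_2(t), u(t)) - \Lambda_2(t, x(t)) \ge -\varrho_2\,\Upsilon(t)\,h_2(t, x(t))$. Then $h_2(t, x(t)) \ge h_2(t_0, x(t_0))\,\exp\big(-\varrho_2 \int_{t_0}^{t} \Upsilon(s)\,ds\big) > 0$ for all $t \ge t_0$. -/

import Mathlib

/-- Intermediate estimate in the proof of Theorem 1 (perturbed double integrator):
for `x₁' = x₂ + d₁(t)`, `x₂' = u + d₂(t)` with `‖(d₁, d₂)(t)‖ ≤ θ`, a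
relative-degree-two candidate CBF `h₁` (independent of `x₂`), margins
`Λ₁(p) = (1/(4μ₁))‖∇h₁(p)‖² + μ₁θ²`, `Λ₂(t, p) = (1/(4μ₂))‖∇_p h₂(t, p)‖² + μ₂θ²`,
and backstepping barrier `h₂(t, p) = ϱ₁ Υ(t) h₁(p) + L_f h₁(p) - Λ₁(p)`, if
`h₂(t₀, x(t₀)) > 0` and the control satisfies
`∂_t h₂ + ∇_p h₂ ⋅ (x₂, u) - Λ₂ ≥ -ϱ₂ Υ(t) h₂` along the trajectory, then
`h₂(t, x(t)) ≥ h₂(t₀, x(t₀)) exp(-ϱ₂ ∫_{t₀}^t Υ) > 0` for all `t ≥ t₀`. -/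
private lemma cross_bound (μ θ b1 b2 e1 e2 : ℝ) (hμ : 0 < μ)
    (h : Real.sqrt (e1 ^ 2 + e2 ^ 2) ≤ θ) :
    -(1 / (4 * μ) * (b1 ^ 2 + b2 ^ 2) + μ * θ ^ 2) ≤ b1 * e1 + b2 * e2 := by
  have h0 : (0:ℝ) ≤ e1 ^ 2 + e2 ^ 2 := by positivity
  have hsq : e1 ^ 2 + e2 ^ 2 ≤ θ ^ 2 := by
    have h1 := Real.sq_sqrt h0
    nlinarith [Real.sqrt_nonneg (e1 ^ 2 + e2 ^ 2)]
  have key : 0 ≤ 4*μ*(b1*e1+b2*e2) + (b1^2+b2^2) + 4*μ^2*θ^2 := by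
    nlinarith [sq_nonneg (b1 + 2*μ*e1), sq_nonneg (b2 + 2*μ*e2), mul_pos hμ hμ]
  have h4 : (0:ℝ) < 4*μ := by linarith
  have heq : 1 / (4*μ) * (b1^2+b2^2) + μ*θ^2 = (b1^2+b2^2 + 4*μ^2*θ^2)/(4*μ) := by
    field_simp
  rw [heq, neg_le, le_div_iff₀ h4]
  nlinarith [key]

theorem perturbed_double_integrator_h2_positive (t0 θ μ1 μ2 : ℝ)
    (hθ : 0 ≤ θ) (hμ1 : 0 < μ1) (hμ2 : 0 < μ2)
    (Υ : ℝ → ℝ) (hΥ : ContDiff ℝ 1 Υ) (hΥpos : ∀ t, t0 ≤ t → 0 < Υ t)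
    (ϱ1 ϱ2 : ℝ) (hϱ1 : 0 ≤ ϱ1) (hϱ2 : 0 < ϱ2)
    (x1 x2 u d1 d2 : ℝ → ℝ)
    (hu : Continuous u) (hd1c : Continuous d1) (hd2c : Continuous d2)
    (hx1 : ∀ t, t0 ≤ t → HasDerivAt x1 (x2 t + d1 t) t)
    (hx2 : ∀ t, t0 ≤ t → HasDerivAt x2 (u t + d2 t) t)
    (hdbound : ∀ t, t0 ≤ t → Real.sqrt (d1 t ^ 2 + d2 t ^ 2) ≤ θ)
    (h1 : ℝ × ℝ → ℝ) (hh1 : ContDiff ℝ 2 h1)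
    (hrel : ∀ p : ℝ × ℝ, fderiv ℝ h1 p (0, 1) = 0)
    (Λ1 : ℝ × ℝ → ℝ)
    (hΛ1 : ∀ p, Λ1 p = 1 / (4 * μ1) *
      ((fderiv ℝ h1 p (1, 0)) ^ 2 + (fderiv ℝ h1 p (0, 1)) ^ 2) + μ1 * θ ^ 2)
    (h2 : ℝ → ℝ × ℝ → ℝ)
    (hh2 : ∀ t p, h2 t p = ϱ1 * Υ t * h1 p + fderiv ℝ h1 p (1, 0) * p.2 - Λ1 p)
    (Λ2 : ℝ → ℝ × ℝ → ℝ)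
    (hΛ2 : ∀ t p, Λ2 t p = 1 / (4 * μ2) *
      ((fderiv ℝ (h2 t) p (1, 0)) ^ 2 + (fderiv ℝ (h2 t) p (0, 1)) ^ 2) + μ2 * θ ^ 2)
    (hinit2 : 0 < h2 t0 (x1 t0, x2 t0))
    (hsafe : ∀ t, t0 ≤ t →
      deriv (fun s => h2 s (x1 t, x2 t)) t
        + (fderiv ℝ (h2 t) (x1 t, x2 t) (1, 0) * x2 t
            + fderiv ℝ (h2 t) (x1 t, x2 t) (0, 1) * u t)
        - Λ2 t (x1 t, x2 t)
        ≥ -ϱ2 * Υ t * h2 t (x1 t, x2 t)) :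
    ∀ t, t0 ≤ t →
      h2 t (x1 t, x2 t) ≥
        h2 t0 (x1 t0, x2 t0) * Real.exp (-ϱ2 * ∫ s in t0..t, Υ s) ∧
      0 < h2 t0 (x1 t0, x2 t0) * Real.exp (-ϱ2 * ∫ s in t0..t, Υ s) := by
  -- regularity of the coefficient functions
  have hf1 : ContDiff ℝ 1 (fderiv ℝ h1) := hh1.fderiv_right (by norm_num)
  have hg1 : ContDiff ℝ 1 (fun p : ℝ × ℝ => fderiv ℝ h1 p (1, 0)) :=
    hf1.clm_apply contDiff_const
  have hg2 : ContDiff ℝ 1 (fun p : ℝ × ℝ => fderiv ℝ h1 p (0, 1)) :=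
    hf1.clm_apply contDiff_const
  have hΛ1eq : Λ1 = fun p => 1 / (4 * μ1) *
      ((fderiv ℝ h1 p (1, 0)) ^ 2 + (fderiv ℝ h1 p (0, 1)) ^ 2) + μ1 * θ ^ 2 :=
    funext hΛ1
  have hΛ1c : ContDiff ℝ 1 Λ1 := by
    rw [hΛ1eq]
    exact (contDiff_const.mul ((hg1.pow 2).add (hg2.pow 2))).add contDiff_const
  set H : ℝ × (ℝ × ℝ) → ℝ :=
    fun q => ϱ1 * Υ q.1 * h1 q.2 + fderiv ℝ h1 q.2 (1, 0) * q.2.2 - Λ1 q.2 with hHdef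
  have hHc : ContDiff ℝ 1 H := by
    apply ContDiff.sub
    · exact ((contDiff_const.mul (hΥ.comp contDiff_fst)).mul
        ((hh1.of_le one_le_two).comp contDiff_snd)).add
        ((hg1.comp contDiff_snd).mul contDiff_snd.snd)
    · exact hΛ1c.comp contDiff_snd
  have hHd : Differentiable ℝ H := hHc.differentiable one_ne_zero
  have hh2H : ∀ t p, h2 t p = H (t, p) := fun t p => hh2 t p
  have hh2Hf : ∀ t, h2 t = fun p => H (t, p) := fun t => funext fun p => hh2H t p
  -- partial derivatives of h2 expressed via the total derivative L of H
  have hpartial_p : ∀ t (X : ℝ × ℝ) (v : ℝ × ℝ),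
      fderiv ℝ (h2 t) X v = fderiv ℝ H (t, X) (0, v) := by
    intro t X v
    have hc : HasFDerivAt (fun p : ℝ × ℝ => ((t : ℝ), p))
        (((0 : (ℝ × ℝ) →L[ℝ] ℝ)).prod (ContinuousLinearMap.id ℝ (ℝ × ℝ))) X :=
      HasFDerivAt.prodMk (hasFDerivAt_const t X) (hasFDerivAt_id X)
    have hcomp := (hHd (t, X)).hasFDerivAt.comp X hc
    have : HasFDerivAt (h2 t)
        ((fderiv ℝ H (t, X)).comp
          (((0 : (ℝ × ℝ) →L[ℝ] ℝ)).prod (ContinuousLinearMap.id ℝ (ℝ × ℝ)))) X := by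
      rw [hh2Hf t]; exact hcomp
    rw [this.fderiv]
    simp
  have hpartial_t : ∀ t (X : ℝ × ℝ),
      HasDerivAt (fun s => h2 s X) (fderiv ℝ H (t, X) (1, (0, 0))) t := by
    intro t X
    have hc : HasDerivAt (fun s : ℝ => (s, X)) ((1 : ℝ), ((0 : ℝ), (0 : ℝ))) t := by
      exact HasDerivAt.prodMk (hasDerivAt_id t) (hasDerivAt_const t X)
    have := (hHd (t, X)).hasFDerivAt.comp_hasDerivAt t hc
    simpa [Function.comp_def, hh2Hf] using this
  -- the trajectory value and its derivative
  set y : ℝ → ℝ := fun s => h2 s (x1 s, x2 s) with hydef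
  set D : ℝ → ℝ :=
    fun t => fderiv ℝ H (t, (x1 t, x2 t)) (1, (x2 t + d1 t, u t + d2 t)) with hDdef
  have hy : ∀ t, t0 ≤ t → HasDerivAt y (D t) t := by
    intro t ht
    have hc : HasDerivAt (fun s : ℝ => (s, (x1 s, x2 s)))
        ((1 : ℝ), (x2 t + d1 t, u t + d2 t)) t :=
      HasDerivAt.prodMk (hasDerivAt_id t) (HasDerivAt.prodMk (hx1 t ht) (hx2 t ht))
    have := (hHd (t, (x1 t, x2 t))).hasFDerivAt.comp_hasDerivAt t hc
    simpa [hydef, Function.comp_def, hh2Hf] using this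
  -- the key differential inequality
  have hkey : ∀ t, t0 ≤ t → -ϱ2 * Υ t * y t ≤ D t := by
    intro t ht
    set X : ℝ × ℝ := (x1 t, x2 t) with hX
    set L := fderiv ℝ H (t, X) with hL
    have hPt : deriv (fun s => h2 s X) t = L (1, (0, 0)) := (hpartial_t t X).deriv
    have hB1 : fderiv ℝ (h2 t) X (1, 0) = L (0, (1, 0)) := hpartial_p t X _
    have hB2 : fderiv ℝ (h2 t) X (0, 1) = L (0, (0, 1)) := hpartial_p t X _
    have hsafe' := hsafe t ht
    rw [hΛ2 t X, hPt, hB1, hB2] at hsafe'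
    have hcross := cross_bound μ2 θ (L (0, (1, 0))) (L (0, (0, 1))) (d1 t) (d2 t)
      hμ2 (hdbound t ht)
    have hDexp : D t = L (1, (0, 0)) + (x2 t + d1 t) * L (0, (1, 0))
        + (u t + d2 t) * L (0, (0, 1)) := by
      have hvec : ((1 : ℝ), (x2 t + d1 t, u t + d2 t))
          = ((1 : ℝ), ((0 : ℝ), (0 : ℝ))) + (x2 t + d1 t) • ((0 : ℝ), ((1 : ℝ), (0 : ℝ)))
            + (u t + d2 t) • ((0 : ℝ), ((0 : ℝ), (1 : ℝ))) := by
        simp [Prod.ext_iff]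
      rw [hDdef]
      simp only [← hX, ← hL, hvec, map_add, map_smul, smul_eq_mul]
    rw [hDexp]
    have hyX : y t = h2 t X := rfl
    rw [hyX]
    nlinarith [hsafe', hcross]
  -- Gronwall via monotonicity of z = y * exp(ϱ2 ∫ Υ)
  set I : ℝ → ℝ := fun t => ∫ s in t0..t, Υ s with hIdef
  have hI : ∀ t, HasDerivAt I (Υ t) t := by
    intro t
    exact intervalIntegral.integral_hasDerivAt_right
      (hΥ.continuous.intervalIntegrable t0 t)
      (hΥ.continuous.stronglyMeasurableAtFilter _ _)
      hΥ.continuous.continuousAt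
  set z : ℝ → ℝ := fun t => y t * Real.exp (ϱ2 * I t) with hzdef
  have hz : ∀ t, t0 ≤ t →
      HasDerivAt z ((D t + ϱ2 * Υ t * y t) * Real.exp (ϱ2 * I t)) t := by
    intro t ht
    have hE : HasDerivAt (fun s => Real.exp (ϱ2 * I s))
        (Real.exp (ϱ2 * I t) * (ϱ2 * Υ t)) t := ((hI t).const_mul ϱ2).exp
    have := HasDerivAt.mul (hy t ht) hE
    rw [show (D t + ϱ2 * Υ t * y t) * Real.exp (ϱ2 * I t) = D t * Real.exp (ϱ2 * I t) + y t * (Real.exp (ϱ2 * I t) * (ϱ2 * Υ t)) by ring]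
    exact this
  have hmono : MonotoneOn z (Set.Ici t0) := by
    apply monotoneOn_of_deriv_nonneg (convex_Ici t0)
    · intro s hs
      exact (hz s hs).continuousAt.continuousWithinAt
    · intro s hs
      rw [interior_Ici] at hs
      exact (hz s (le_of_lt hs)).differentiableAt.differentiableWithinAt
    · intro s hs
      rw [interior_Ici] at hs
      rw [(hz s (le_of_lt hs)).deriv]
      have := hkey s (le_of_lt hs)
      have h1 : 0 ≤ D s + ϱ2 * Υ s * y s := by linarith
      exact mul_nonneg h1 (Real.exp_pos _).le
  intro t ht
  have hzle : z t0 ≤ z t := hmono Set.self_mem_Ici ht ht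
  have hIt0 : I t0 = 0 := intervalIntegral.integral_same
  have hz0 : z t0 = y t0 := by simp [hzdef, hIt0]
  rw [hz0] at hzle
  constructor
  · have hmul := mul_le_mul_of_nonneg_right hzle (Real.exp_pos (-(ϱ2 * I t))).le
    rw [hzdef] at hmul
    simp only [mul_assoc, ← Real.exp_add] at hmul
    rw [add_neg_cancel, Real.exp_zero, mul_one] at hmul
    have : -ϱ2 * I t = -(ϱ2 * I t) := by ring
    simpa [hydef, hIdef, this] using hmul
  · exact mul_pos hinit2 (Real.exp_pos _)
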